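/- arXiv:1603.03950 — 4 statements merged into one kernel-verified Lean document; each statement's English description precedes it below -/
import Mathlib

section
/- Let α > 0 and c ∈ ℝ. Then ∫_ℝ Φ(α v − c) e^{−v} dv = exp(0.5/α² − c/α), where the integral is with respect to Lebesgue measure on ℝ (the integrand is Lebesgue integrable on ℝ). -/
open MeasureTheory Filter Set

/-- The standard normal cumulative distribution function `Φ`. -/
noncomputable def stdNormalCDF (x : ℝ) : ℝ :=
  ∫ t in Set.Iic x, Real.exp (-t ^ 2 / 2) / Real.sqrt (2 * Real.pi)

private lemma cexp_real_quad' (b c d x : ℝ) :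
    Complex.exp (-(b:ℂ) * x ^ 2 + c * x + d)
      = ((Real.exp (-b * x ^ 2 + c * x + d) : ℝ) : ℂ) := by
  rw [Complex.ofReal_exp]; push_cast; ring_nf

private lemma integrable_rexp_quad' {b : ℝ} (hb : 0 < b) (c d : ℝ) :
    Integrable fun x : ℝ => Real.exp (-b * x ^ 2 + c * x + d) := by
  have h := (integrable_cexp_quadratic (b := (b:ℂ)) (by simpa using hb) c d).norm
  refine h.congr (Eventually.of_forall fun x => ?_)
  simp only [cexp_real_quad', Complex.norm_real]
  exact Real.norm_of_nonneg (Real.exp_nonneg _)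

private lemma integral_rexp_quad' {b : ℝ} (hb : 0 < b) (c d : ℝ) :
    ∫ x : ℝ, Real.exp (-b * x ^ 2 + c * x + d)
      = Real.sqrt (Real.pi / b) * Real.exp (d + c ^ 2 / (4 * b)) := by
  have h := integral_cexp_quadratic (b := -(b:ℂ)) (by simpa using hb) (c:ℂ) (d:ℂ)
  simp_rw [cexp_real_quad' b c d] at h
  rw [show (∫ x : ℝ, ((Real.exp (-b*x^2+c*x+d) : ℝ) : ℂ))
      = ((∫ x : ℝ, Real.exp (-b*x^2+c*x+d) : ℝ) : ℂ) from integral_ofReal] at h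
  have h2 : ((Real.pi / b : ℝ) : ℂ) ^ (1 / 2 : ℂ)
      = ((Real.sqrt (Real.pi / b) : ℝ) : ℂ) := by
    rw [show (1/2 : ℂ) = ((1/2 : ℝ) : ℂ) by norm_num,
      ← Complex.ofReal_cpow (by positivity), Real.sqrt_eq_rpow]
  rw [neg_neg] at h
  have h3 : (d : ℂ) - (c:ℂ) ^ 2 / (4 * -(b:ℂ)) = ((d + c ^ 2 / (4 * b) : ℝ) : ℂ) := by
    push_cast; ring
  have h4 : ((Real.pi : ℝ) : ℂ) / (b : ℂ) = ((Real.pi / b : ℝ) : ℂ) := by push_cast; ring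
  rw [h3, h4, h2, ← Complex.ofReal_exp, ← Complex.ofReal_mul] at h
  exact_mod_cast h

theorem integral_stdNormalCDF_mul_exp_neg (α c : ℝ) (hα : 0 < α) :
    Integrable (fun v : ℝ => stdNormalCDF (α * v - c) * Real.exp (-v)) ∧
    ∫ v : ℝ, stdNormalCDF (α * v - c) * Real.exp (-v) =
      Real.exp (0.5 / α ^ 2 - c / α) := by
  set φ : ℝ → ℝ := fun t => Real.exp (-t ^ 2 / 2) / Real.sqrt (2 * Real.pi) with hφ
  set F : ℝ × ℝ → ℝ :=
    ({p : ℝ × ℝ | p.2 ≤ α * p.1 - c}).indicator (fun p => φ p.2 * Real.exp (-p.1)) with hF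
  have hφnn : ∀ t, 0 ≤ φ t := fun t => div_nonneg (Real.exp_nonneg _) (Real.sqrt_nonneg _)
  have hS : MeasurableSet {p : ℝ × ℝ | p.2 ≤ α * p.1 - c} :=
    measurableSet_le measurable_snd ((measurable_fst.const_mul α).sub_const c)
  have hFm : AEStronglyMeasurable F (volume.prod volume) := by
    refine (Measurable.indicator ?_ hS).aestronglyMeasurable
    simp only [hφ]; fun_prop
  have hFnn : ∀ p, 0 ≤ F p := by
    intro p
    apply Set.indicator_nonneg
    intro p _
    exact mul_nonneg (hφnn _) (Real.exp_nonneg _)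
  -- slice in v for fixed t
  have key1 : ∀ v t : ℝ, F (v, t)
      = (Set.Ici ((t + c)/α)).indicator (fun v => φ t * Real.exp (-v)) v := by
    intro v t
    have hiff : (t + c)/α ≤ v ↔ t ≤ α * v - c := by
      rw [div_le_iff₀ hα]
      constructor <;> intro h <;> nlinarith
    simp only [hF, Set.indicator, Set.mem_setOf_eq, Set.mem_Ici, hiff]
  -- slice in t for fixed v
  have key2 : ∀ v : ℝ, (fun t => F (v, t))
      = (Set.Iic (α * v - c)).indicator (fun t => φ t * Real.exp (-v)) := by
    intro v; funext t
    simp only [hF, Set.indicator, Set.mem_setOf_eq, Set.mem_Iic]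
  have hIci : ∀ a : ℝ, IntegrableOn (fun v : ℝ => Real.exp (-v)) (Set.Ici a) := by
    intro a
    rw [integrableOn_Ici_iff_integrableOn_Ioi]
    exact (exp_neg_integrableOn_Ioi a one_pos).congr_fun (fun x _ => by norm_num)
      measurableSet_Ioi
  have hvint : ∀ t : ℝ, Integrable (fun v => F (v, t)) := by
    intro t
    simp_rw [key1]
    rw [integrable_indicator_iff measurableSet_Ici]
    exact (hIci _).const_mul _
  have key3 : ∀ t : ℝ, ∫ v, F (v, t) = φ t * Real.exp (-((t + c)/α)) := by
    intro t
    simp_rw [key1]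
    rw [integral_indicator measurableSet_Ici, MeasureTheory.integral_Ici_eq_integral_Ioi,
      integral_const_mul, integral_exp_neg_Ioi]
  have keyφ : ∀ t : ℝ, φ t * Real.exp (-((t + c)/α))
      = Real.exp (-(1/2) * t ^ 2 + (-1/α) * t + (-c/α)) * (Real.sqrt (2 * Real.pi))⁻¹ := by
    intro t
    have he : -t ^ 2 / 2 + -((t + c)/α) = -(1/2) * t ^ 2 + (-1/α) * t + (-c/α) := by
      field_simp; ring
    rw [hφ]
    show Real.exp (-t ^ 2 / 2) / Real.sqrt (2 * Real.pi) * Real.exp (-((t + c)/α)) = _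
    rw [div_mul_eq_mul_div, ← Real.exp_add, he, div_eq_mul_inv]
  have hquad : Integrable
      (fun t : ℝ => Real.exp (-(1/2) * t ^ 2 + (-1/α) * t + (-c/α))
        * (Real.sqrt (2 * Real.pi))⁻¹) :=
    (integrable_rexp_quad' (by norm_num) (-1/α) (-c/α)).mul_const _
  have hFint : Integrable F (volume.prod volume) := by
    rw [integrable_prod_iff' hFm]
    refine ⟨Eventually.of_forall hvint, ?_⟩
    refine hquad.congr (Eventually.of_forall fun t => ?_)
    dsimp only
    rw [← keyφ t, ← key3 t]
    congr 1
    funext v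
    exact (Real.norm_of_nonneg (hFnn _)).symm
  have hmarg : ∀ v : ℝ, ∫ t, F (v, t) = stdNormalCDF (α * v - c) * Real.exp (-v) := by
    intro v
    rw [key2 v, integral_indicator measurableSet_Iic, integral_mul_const]
    rfl
  have huncurry : Function.uncurry (fun v t => F (v, t)) = F := by
    funext p; rfl
  constructor
  · have := hFint.integral_prod_left
    refine this.congr (Eventually.of_forall fun v => ?_)
    exact hmarg v
  · calc ∫ v : ℝ, stdNormalCDF (α * v - c) * Real.exp (-v)
        = ∫ v : ℝ, ∫ t : ℝ, F (v, t) := by simp_rw [hmarg]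
      _ = ∫ t : ℝ, ∫ v : ℝ, F (v, t) := by
          exact integral_integral_swap (by rw [huncurry]; exact hFint)
      _ = ∫ t : ℝ, Real.exp (-(1/2) * t ^ 2 + (-1/α) * t + (-c/α))
            * (Real.sqrt (2 * Real.pi))⁻¹ := by simp_rw [key3, keyφ]
      _ = Real.exp (0.5 / α ^ 2 - c / α) := by
          rw [integral_mul_const, integral_rexp_quad' (by norm_num) (-1/α) (-c/α)]
          rw [show Real.pi / (1/2) = 2 * Real.pi by ring]
          rw [show -c/α + (-1/α) ^ 2 / (4 * (1/2)) = 0.5 / α ^ 2 - c / α by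
            field_simp; ring]
          rw [mul_comm, ← mul_assoc, inv_mul_cancel₀ (by positivity), one_mul]
end

section
/- Let Z be a standard normal random variable and E an independent random variable with the exponential distribution of rate 1, and let α > 0. Then for every z ∈ ℝ, P(Z + α·E ≤ z) = Φ(z) − exp(0.5/α² − z/α)·Φ(z − 1/α). -/
open MeasureTheory ProbabilityTheory Filter Set

/-- The exponential distribution of rate 1 on `ℝ`: density `e^{-x}` on `[0, ∞)`, `0` elsewhere. -/
noncomputable def expMeasure1 : Measure ℝ :=
  volume.withDensity fun x => ENNReal.ofReal (if 0 ≤ x then Real.exp (-x) else 0)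

lemma expDens_eq : (fun x : ℝ => if 0 ≤ x then Real.exp (-x) else 0)
    = Set.indicator (Set.Ici 0) (fun x => Real.exp (-x)) := by
  ext x; simp [Set.indicator_apply]

lemma expDens_integrable :
    Integrable (fun x : ℝ => if 0 ≤ x then Real.exp (-x) else 0) := by
  rw [expDens_eq, integrable_indicator_iff measurableSet_Ici,
    integrableOn_Ici_iff_integrableOn_Ioi]
  exact (exp_neg_integrableOn_Ioi 0 one_pos).congr_fun (fun x _ => by norm_num)
    measurableSet_Ioi

lemma expMeasure1_Iic (t : ℝ) :
    expMeasure1 (Set.Iic t) = ENNReal.ofReal (1 - Real.exp (-t)) := by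
  rw [expMeasure1, withDensity_apply _ measurableSet_Iic]
  rw [← ofReal_integral_eq_lintegral_ofReal expDens_integrable.integrableOn
    (ae_of_all _ fun x => by positivity)]
  rw [expDens_eq, setIntegral_indicator measurableSet_Ici]
  rcases le_or_gt t 0 with ht | ht
  · have h1 : Set.Iic t ∩ Set.Ici 0 ⊆ {0} := fun x ⟨hx1, hx2⟩ => by
      simp only [Set.mem_singleton_iff]; exact le_antisymm (hx1.trans ht) hx2
    have h0 : 1 - Real.exp (-t) ≤ 0 := by
      nlinarith [Real.one_le_exp (neg_nonneg.mpr ht)]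
    rw [Measure.restrict_eq_zero.mpr (measure_mono_null h1 (measure_singleton 0)),
      integral_zero_measure, ENNReal.ofReal_of_nonpos h0]
    simp
  · have h1 : Set.Iic t ∩ Set.Ici 0 = Set.Icc 0 t := by
      ext x; simp [Set.mem_Icc, and_comm]
    rw [h1, integral_Icc_eq_integral_Ioc, ← intervalIntegral.integral_of_le ht.le,
      intervalIntegral.integral_comp_neg (f := fun x => Real.exp x)]
    simp [integral_exp]

instance : IsProbabilityMeasure expMeasure1 := by
  constructor
  rw [expMeasure1, withDensity_apply _ MeasurableSet.univ, Measure.restrict_univ,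
    ← ofReal_integral_eq_lintegral_ofReal expDens_integrable
      (ae_of_all _ fun x => by positivity)]
  rw [expDens_eq]
  simp only [integral_indicator measurableSet_Ici]
  rw [integral_Ici_eq_integral_Ioi, integral_exp_neg_Ioi_zero, ENNReal.ofReal_one]

lemma stdNormal_shift (z c : ℝ) :
    (∫ x in Set.Iic z, Real.exp (-(x - c) ^ 2 / 2) / Real.sqrt (2 * Real.pi))
      = stdNormalCDF (z - c) := by
  rw [stdNormalCDF, ← integral_indicator measurableSet_Iic,
    ← integral_indicator measurableSet_Iic]
  have h : ∀ x : ℝ, (Set.Iic z).indicator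
        (fun x => Real.exp (-(x - c) ^ 2 / 2) / Real.sqrt (2 * Real.pi)) x
      = (Set.Iic (z - c)).indicator
        (fun u => Real.exp (-u ^ 2 / 2) / Real.sqrt (2 * Real.pi)) (x - c) := by
    intro x
    by_cases hx : x ≤ z
    · rw [Set.indicator_of_mem (Set.mem_Iic.mpr hx), Set.indicator_of_mem (by simpa using sub_le_sub_right hx c)]
    · rw [Set.indicator_of_notMem (by simpa using hx),
        Set.indicator_of_notMem (by simp only [Set.mem_Iic]; intro h; exact hx (by linarith))]
  simp_rw [h]
  exact integral_sub_right_eq_self _ c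

theorem cdf_normal_plus_scaled_exponential
    {Ω : Type*} [MeasureSpace Ω] [IsProbabilityMeasure (ℙ : Measure Ω)]
    (Z E : Ω → ℝ) (hZ : Measurable Z) (hE : Measurable E)
    (hlawZ : Measure.map Z ℙ = gaussianReal 0 1)
    (hlawE : Measure.map E ℙ = expMeasure1)
    (hindep : IndepFun Z E ℙ)
    (α : ℝ) (hα : 0 < α) (z : ℝ) :
    (ℙ {ω | Z ω + α * E ω ≤ z}).toReal =
      stdNormalCDF z - Real.exp (0.5 / α ^ 2 - z / α) * stdNormalCDF (z - 1 / α) := by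
  have hα0 : (α : ℝ) ≠ 0 := hα.ne'
  set φ : ℝ → ℝ := fun x => Real.exp (-x ^ 2 / 2) / Real.sqrt (2 * Real.pi) with hφ
  have hφeq : ∀ x, gaussianPDFReal 0 1 x = φ x := by
    intro x
    unfold gaussianPDFReal
    simp only [NNReal.coe_one, mul_one, sub_zero, hφ]
    rw [mul_comm, ← div_eq_mul_inv]
  have hφ_nonneg : ∀ x, 0 ≤ φ x := fun x => by positivity
  have hφ_int : Integrable φ :=
    (integrable_gaussianPDFReal 0 1).congr (ae_of_all _ hφeq)
  -- Step 1: joint law is the product measure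
  have hmap : Measure.map (fun ω => (Z ω, E ω)) ℙ = (gaussianReal 0 1).prod expMeasure1 := by
    rw [← hlawZ, ← hlawE]
    exact (indepFun_iff_map_prod_eq_prod_map_map hZ.aemeasurable hE.aemeasurable).mp hindep
  have hS : MeasurableSet {p : ℝ × ℝ | p.1 + α * p.2 ≤ z} :=
    measurableSet_le (by fun_prop) measurable_const
  have h1 : ℙ {ω | Z ω + α * E ω ≤ z}
      = ((gaussianReal 0 1).prod expMeasure1) {p : ℝ × ℝ | p.1 + α * p.2 ≤ z} := by
    rw [← hmap, Measure.map_apply (hZ.prodMk hE) hS]; rfl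
  -- Step 2: Fubini, exponential CDF
  have h2 : ((gaussianReal 0 1).prod expMeasure1) {p : ℝ × ℝ | p.1 + α * p.2 ≤ z}
      = ∫⁻ x, ENNReal.ofReal (1 - Real.exp (-((z - x) / α))) ∂(gaussianReal 0 1) := by
    rw [Measure.prod_apply hS]
    refine lintegral_congr fun x => ?_
    have hset : (Prod.mk x ⁻¹' {p : ℝ × ℝ | p.1 + α * p.2 ≤ z}) = Set.Iic ((z - x) / α) := by
      ext y
      simp only [Set.mem_preimage, Set.mem_setOf_eq, Set.mem_Iic]
      rw [le_div_iff₀ hα]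
      constructor <;> intro h <;> nlinarith
    rw [hset, expMeasure1_Iic]
  -- Step 3: gaussian density
  set g : ℝ → ℝ :=
    (Set.Iic z).indicator (fun x => (1 - Real.exp (-((z - x) / α))) * φ x) with hg
  have hg_nonneg : ∀ x, 0 ≤ g x := by
    intro x
    rw [hg]
    by_cases hx : x ≤ z
    · rw [Set.indicator_of_mem (Set.mem_Iic.mpr hx)]
      have : Real.exp (-((z - x) / α)) ≤ 1 := by
        rw [Real.exp_le_one_iff]
        have : 0 ≤ (z - x) / α := div_nonneg (by linarith) hα.le
        linarith
      have := hφ_nonneg x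
      nlinarith
    · rw [Set.indicator_of_notMem (by simpa using hx)]
  have hg_meas : Measurable g :=
    (by fun_prop : Measurable fun x => (1 - Real.exp (-((z - x) / α))) * φ x).indicator
      measurableSet_Iic
  have hg_le : ∀ x, ‖g x‖ ≤ gaussianPDFReal 0 1 x := by
    intro x
    rw [Real.norm_eq_abs, abs_of_nonneg (hg_nonneg x), hφeq x, hg]
    by_cases hx : x ≤ z
    · rw [Set.indicator_of_mem (Set.mem_Iic.mpr hx)]
      have h1 : Real.exp (-((z - x) / α)) > 0 := Real.exp_pos _
      have := hφ_nonneg x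
      nlinarith
    · rw [Set.indicator_of_notMem (by simpa using hx)]
      exact hφ_nonneg x
  have hg_int : Integrable g :=
    (integrable_gaussianPDFReal 0 1).mono' hg_meas.aestronglyMeasurable (ae_of_all _ hg_le)
  have h3 : (∫⁻ x, ENNReal.ofReal (1 - Real.exp (-((z - x) / α))) ∂(gaussianReal 0 1))
      = ENNReal.ofReal (∫ x, g x) := by
    rw [gaussianReal_of_var_ne_zero 0 one_ne_zero,
      lintegral_withDensity_eq_lintegral_mul _ (measurable_gaussianPDF 0 1) (by fun_prop)]
    rw [ofReal_integral_eq_lintegral_ofReal hg_int (ae_of_all _ hg_nonneg)]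
    refine lintegral_congr fun x => ?_
    simp only [Pi.mul_apply, gaussianPDF, hg]
    by_cases hx : x ≤ z
    · rw [Set.indicator_of_mem (Set.mem_Iic.mpr hx), ← ENNReal.ofReal_mul
        (gaussianPDFReal_nonneg 0 1 x), hφeq x, mul_comm]
    · rw [Set.indicator_of_notMem (by simpa using hx), ENNReal.ofReal_zero]
      have hle : 1 - Real.exp (-((z - x) / α)) ≤ 0 := by
        have h1 : 1 ≤ Real.exp (-((z - x) / α)) := by
          rw [Real.one_le_exp_iff]
          push_neg at hx
          have : (z - x) / α < 0 := div_neg_of_neg_of_pos (by linarith) hα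
          linarith
        linarith
      rw [ENNReal.ofReal_of_nonpos hle, mul_zero]
  -- Step 4: compute the real integral
  have hψ_int : IntegrableOn (fun x => Real.exp (-((z - x) / α)) * φ x) (Set.Iic z) := by
    refine Integrable.mono' hφ_int.integrableOn
      (Measurable.aestronglyMeasurable (by rw [hφ]; fun_prop))
      (((ae_restrict_mem measurableSet_Iic).mono fun x hx => ?_))
    rw [Real.norm_eq_abs, abs_of_nonneg (by positivity)]
    have h1 : Real.exp (-((z - x) / α)) ≤ 1 := by
      rw [Real.exp_le_one_iff]
      have : (0:ℝ) ≤ (z - x) / α := div_nonneg (by simp at hx; linarith) hα.le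
      linarith
    have := hφ_nonneg x
    nlinarith
  have h4 : ∫ x, g x
      = stdNormalCDF z - ∫ x in Set.Iic z, Real.exp (-((z - x) / α)) * φ x := by
    rw [hg, integral_indicator measurableSet_Iic]
    have : ∀ x, (1 - Real.exp (-((z - x) / α))) * φ x
        = φ x - Real.exp (-((z - x) / α)) * φ x := fun x => by ring
    simp_rw [this]
    rw [integral_sub hφ_int.integrableOn hψ_int]
    rfl
  -- Step 5: complete the square
  have h5 : ∫ x in Set.Iic z, Real.exp (-((z - x) / α)) * φ x
      = Real.exp (0.5 / α ^ 2 - z / α) * stdNormalCDF (z - 1 / α) := by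
    have hpt : ∀ x, Real.exp (-((z - x) / α)) * φ x
        = Real.exp (0.5 / α ^ 2 - z / α)
          * (Real.exp (-(x - 1 / α) ^ 2 / 2) / Real.sqrt (2 * Real.pi)) := by
      intro x
      have he : Real.exp (-((z - x) / α)) * Real.exp (-x ^ 2 / 2)
          = Real.exp (0.5 / α ^ 2 - z / α) * Real.exp (-(x - 1 / α) ^ 2 / 2) := by
        rw [← Real.exp_add, ← Real.exp_add]
        congr 1
        field_simp
        ring
      rw [hφ]
      simp only
      rw [mul_div_assoc', he, mul_div_assoc]
    simp_rw [hpt]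
    rw [integral_const_mul, stdNormal_shift]
  rw [h1, h2, h3, ENNReal.toReal_ofReal (integral_nonneg hg_nonneg), h4, h5]
end

section
/- Let Z be a standard normal random variable and E₀, E₁ independent random variables with the exponential distribution of rate 1, with (Z, E₀, E₁) mutually independent, and let α₀, α > 0 with α₀ ≠ α. Then for every z ∈ ℝ, P(Z + α₀·E₀ + α·E₁ ≤ z) = Φ(z) − [α₀ exp(0.5/α₀² − z/α₀)Φ(z − 1/α₀) − α exp(0.5/α² − z/α)Φ(z − 1/α)] / (α₀ − α). -/
set_option linter.dupNamespace false
set_option maxHeartbeats 1000000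


open MeasureTheory ProbabilityTheory Filter Set

namespace AuxCDF

noncomputable def phi (x : ℝ) : ℝ := Real.exp (-x ^ 2 / 2) / Real.sqrt (2 * Real.pi)

lemma phi_eq_gaussianPDFReal : phi = gaussianPDFReal 0 1 := by
  ext x
  simp [phi, gaussianPDFReal, div_eq_inv_mul, NNReal.coe_one]

lemma phi_nonneg (x : ℝ) : 0 ≤ phi x := by
  rw [phi_eq_gaussianPDFReal]; exact gaussianPDFReal_nonneg 0 1 x

lemma phi_integrable : Integrable phi := by
  rw [phi_eq_gaussianPDFReal]; exact integrable_gaussianPDFReal 0 1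

lemma phi_measurable : Measurable phi := by
  rw [phi_eq_gaussianPDFReal]; exact measurable_gaussianPDFReal 0 1

lemma stdNormalCDF_eq (t : ℝ) : stdNormalCDF t = ∫ x in Set.Iic t, phi x := rfl

lemma stdNormalCDF_nonneg (t : ℝ) : 0 ≤ stdNormalCDF t :=
  setIntegral_nonneg measurableSet_Iic fun x _ => phi_nonneg x

lemma gaussian_Iic (t : ℝ) :
    gaussianReal 0 1 (Set.Iic t) = ENNReal.ofReal (stdNormalCDF t) := by
  rw [gaussianReal_apply_eq_integral 0 one_ne_zero, stdNormalCDF_eq, ← phi_eq_gaussianPDFReal]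

lemma phi_mul_exp (c x : ℝ) : phi x * Real.exp (c * x) = Real.exp (c ^ 2 / 2) * phi (x - c) := by
  simp only [phi, div_mul_eq_mul_div, mul_div_assoc, ← Real.exp_add]
  rw [mul_comm (Real.exp _), div_mul_eq_mul_div, ← Real.exp_add]
  congr 2
  ring

lemma integrable_phi_mul_exp (c : ℝ) : Integrable (fun x => phi x * Real.exp (c * x)) := by
  simp only [phi_mul_exp]
  exact ((phi_integrable.comp_sub_right c).const_mul _)

lemma lemma1 (c t : ℝ) :
    ∫ x in Set.Iic t, phi x * Real.exp (c * x)
      = Real.exp (c ^ 2 / 2) * stdNormalCDF (t - c) := by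
  simp only [phi_mul_exp]
  rw [integral_const_mul]
  congr 1
  rw [stdNormalCDF_eq]
  rw [← MeasureTheory.integral_indicator measurableSet_Iic,
      ← MeasureTheory.integral_indicator measurableSet_Iic]
  have : (Set.Iic t).indicator (fun x => phi (x - c)) =
      fun x => (Set.Iic (t - c)).indicator phi (x - c) := by
    ext x
    simp only [Set.indicator_apply, Set.mem_Iic, sub_le_sub_iff_right]
  rw [this]
  simp only [sub_eq_add_neg]
  exact integral_add_right_eq_self (fun y => (Set.Iic (t - c)).indicator phi y) (-c)



lemma expInt {lam : ℝ} (hlam : lam ≠ 0) {M : ℝ} (hM : 0 ≤ M) :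
    ∫ v in Set.Ioc 0 M, Real.exp (-(lam * v)) = (1 - Real.exp (-(lam * M))) / lam := by
  rw [← intervalIntegral.integral_of_le hM]
  have h1 : ∀ v : ℝ, Real.exp (-(lam * v)) = Real.exp ((-lam) * v) := by
    intro v; congr 1; ring
  simp only [h1]
  rw [intervalIntegral.integral_comp_mul_left Real.exp (neg_ne_zero.mpr hlam)]
  rw [integral_exp]
  rw [smul_eq_mul, mul_zero, Real.exp_zero, show -lam * M = -(lam * M) by ring]
  rw [inv_neg, neg_mul, neg_eq_iff_eq_neg, ← div_neg,
    show (1 - Real.exp (-(lam*M))) = -(Real.exp (-(lam*M)) - 1) by ring,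
    neg_div_neg_eq, inv_mul_eq_div]

lemma frac_nonneg {lam : ℝ} (hlam : lam ≠ 0) {M : ℝ} (hM : 0 ≤ M) :
    0 ≤ (1 - Real.exp (-(lam * M))) / lam := by
  rcases hlam.lt_or_gt with h | h
  · apply div_nonneg_of_nonpos _ h.le
    simp only [sub_nonpos]
    rw [← Real.exp_zero]
    apply Real.exp_le_exp.mpr
    nlinarith
  · apply div_nonneg _ h.le
    simp only [sub_nonneg, ← Real.exp_zero]
    apply Real.exp_le_exp.mpr
    nlinarith

lemma integrand_eq {α lam : ℝ} (hα : 0 < α) (hlam : lam ≠ 0) (t : ℝ) :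
    (fun x => phi x * ((1 - Real.exp (-(lam * ((t - x) / α)))) / lam))
      = fun x => (1 / lam) * phi x
          - (Real.exp (-(lam * t / α)) / lam) * (phi x * Real.exp ((lam / α) * x)) := by
  ext x
  rw [show -(lam * ((t - x) / α)) = -(lam * t / α) + (lam / α) * x by field_simp; ring,
    Real.exp_add]
  ring

lemma key_integrable {α lam : ℝ} (hα : 0 < α) (hlam : lam ≠ 0) (t : ℝ) :
    IntegrableOn (fun x => phi x * ((1 - Real.exp (-(lam * ((t - x) / α)))) / lam))
      (Set.Iic t) := by
  rw [integrand_eq hα hlam t]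
  exact ((phi_integrable.const_mul _).sub
    ((integrable_phi_mul_exp (lam / α)).const_mul _)).restrict

lemma key_val {α lam : ℝ} (hα : 0 < α) (hlam : lam ≠ 0) (t : ℝ) :
    ∫ x in Set.Iic t, phi x * ((1 - Real.exp (-(lam * ((t - x) / α)))) / lam)
      = (stdNormalCDF t
          - Real.exp (lam ^ 2 / (2 * α ^ 2) - lam * t / α) * stdNormalCDF (t - lam / α)) / lam := by
  rw [integrand_eq hα hlam t]
  rw [MeasureTheory.integral_sub ((phi_integrable.const_mul _).restrict)
    (((integrable_phi_mul_exp (lam / α)).const_mul _).restrict)]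
  rw [integral_const_mul, integral_const_mul, lemma1, ← stdNormalCDF_eq]
  rw [show Real.exp (-(lam * t / α)) / lam
        * (Real.exp ((lam / α) ^ 2 / 2) * stdNormalCDF (t - lam / α))
      = (Real.exp (-(lam * t / α)) * Real.exp ((lam / α) ^ 2 / 2))
        * stdNormalCDF (t - lam / α) / lam by ring,
    ← Real.exp_add,
    show -(lam * t / α) + (lam / α) ^ 2 / 2 = lam ^ 2 / (2 * α ^ 2) - lam * t / α by
      field_simp; ring]
  ring

lemma key_pos {α lam : ℝ} (hα : 0 < α) (hlam : lam ≠ 0) (t : ℝ) :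
    0 ≤ (stdNormalCDF t
        - Real.exp (lam ^ 2 / (2 * α ^ 2) - lam * t / α) * stdNormalCDF (t - lam / α)) / lam := by
  rw [← key_val hα hlam t]
  apply setIntegral_nonneg measurableSet_Iic
  intro x hx
  apply mul_nonneg (phi_nonneg x)
  exact frac_nonneg hlam (div_nonneg (by simpa using hx) hα.le)

lemma key {α lam : ℝ} (hα : 0 < α) (hlam : lam ≠ 0) (t : ℝ) :
    ∫⁻ v in Set.Ioi (0 : ℝ), ENNReal.ofReal (Real.exp (-(lam * v)) * stdNormalCDF (t - α * v))
      = ENNReal.ofReal ((stdNormalCDF t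
          - Real.exp (lam ^ 2 / (2 * α ^ 2) - lam * t / α) * stdNormalCDF (t - lam / α)) / lam) := by
  set g : ℝ × ℝ → ENNReal := fun p => ENNReal.ofReal (Real.exp (-(lam * p.1)) * phi p.2) with hg
  set S : Set (ℝ × ℝ) := {p | 0 < p.1 ∧ p.2 ≤ t - α * p.1} with hS
  have hgm : Measurable g := by
    apply Measurable.ennreal_ofReal
    exact (Real.measurable_exp.comp ((measurable_fst.const_mul lam).neg)).mul
      (phi_measurable.comp measurable_snd)
  have hSm : MeasurableSet S := by
    rw [hS, Set.setOf_and]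
    exact (measurableSet_lt measurable_const measurable_fst).inter
      (measurableSet_le measurable_snd (measurable_const.sub (measurable_fst.const_mul α)))
  have hiff : ∀ v x : ℝ, (x ≤ t - α * v) ↔ (v ≤ (t - x) / α) := by
    intro v x
    rw [le_div_iff₀ hα]
    constructor <;> intro h <;> linarith
  have hprod : ∫⁻ p, S.indicator g p ∂((volume : Measure ℝ).prod volume)
      = ∫⁻ v in Set.Ioi (0 : ℝ),
          ENNReal.ofReal (Real.exp (-(lam * v)) * stdNormalCDF (t - α * v)) := by
    rw [lintegral_prod _ (hgm.indicator hSm).aemeasurable]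
    have h1 : ∀ v : ℝ, (∫⁻ x, S.indicator g (v, x))
        = (Set.Ioi (0 : ℝ)).indicator
            (fun v => ENNReal.ofReal (Real.exp (-(lam * v)) * stdNormalCDF (t - α * v))) v := by
      intro v
      by_cases hv : (0 : ℝ) < v
      · rw [Set.indicator_of_mem (Set.mem_Ioi.mpr hv)]
        have hind : ∀ x, S.indicator g (v, x)
            = (Set.Iic (t - α * v)).indicator (fun x => g (v, x)) x := by
          intro x
          by_cases hx : x ≤ t - α * v
          · rw [Set.indicator_of_mem (show (v, x) ∈ S from ⟨hv, hx⟩),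
              Set.indicator_of_mem (Set.mem_Iic.mpr hx)]
          · rw [Set.indicator_of_notMem (fun hmem => hx hmem.2),
              Set.indicator_of_notMem (fun hmem => hx (Set.mem_Iic.mp hmem))]
        simp only [hind]
        rw [lintegral_indicator measurableSet_Iic]
        have hsplit : ∀ x : ℝ, g (v, x)
            = ENNReal.ofReal (Real.exp (-(lam * v))) * ENNReal.ofReal (phi x) := by
          intro x
          rw [hg]
          exact ENNReal.ofReal_mul (Real.exp_nonneg _)
        simp only [hsplit]
        rw [lintegral_const_mul _ phi_measurable.ennreal_ofReal,
          ← ofReal_integral_eq_lintegral_ofReal phi_integrable.restrict (ae_of_all _ phi_nonneg),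
          ← ENNReal.ofReal_mul (Real.exp_nonneg _), ← stdNormalCDF_eq]
      · rw [Set.indicator_of_notMem (fun h => hv (Set.mem_Ioi.mp h))]
        have hzero : ∀ x, S.indicator g (v, x) = 0 := by
          intro x
          exact Set.indicator_of_notMem (fun hmem => hv hmem.1) _
        simp only [hzero, lintegral_zero]
    simp only [h1]
    rw [← lintegral_indicator measurableSet_Ioi]
  have hprod2 : ∫⁻ p, S.indicator g p ∂((volume : Measure ℝ).prod volume)
      = ENNReal.ofReal
          (∫ x in Set.Iic t, phi x * ((1 - Real.exp (-(lam * ((t - x) / α)))) / lam)) := by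
    rw [lintegral_prod_symm _ (hgm.indicator hSm).aemeasurable]
    have h1 : ∀ x : ℝ, (∫⁻ v, S.indicator g (v, x))
        = (Set.Iic t).indicator
            (fun x => ENNReal.ofReal
              (phi x * ((1 - Real.exp (-(lam * ((t - x) / α)))) / lam))) x := by
      intro x
      have hset : ∀ v, S.indicator g (v, x)
          = (Set.Ioc (0 : ℝ) ((t - x) / α)).indicator (fun v => g (v, x)) v := by
        intro v
        by_cases hv : v ∈ Set.Ioc (0 : ℝ) ((t - x) / α)
        · rw [Set.indicator_of_mem hv,
            Set.indicator_of_mem (show (v, x) ∈ S from ⟨hv.1, (hiff v x).mpr hv.2⟩)]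
        · rw [Set.indicator_of_notMem hv, Set.indicator_of_notMem
            (fun hmem => hv ⟨hmem.1, (hiff v x).mp hmem.2⟩)]
      simp only [hset]
      rw [lintegral_indicator measurableSet_Ioc]
      have hsplit : ∀ v : ℝ, g (v, x)
          = ENNReal.ofReal (phi x) * ENNReal.ofReal (Real.exp (-(lam * v))) := by
        intro v
        show ENNReal.ofReal (Real.exp (-(lam * v)) * phi x) = _
        rw [mul_comm]
        exact ENNReal.ofReal_mul (phi_nonneg x)
      simp only [hsplit]
      have hm2 : Measurable fun v : ℝ => ENNReal.ofReal (Real.exp (-(lam * v))) :=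
        ((measurable_id'.const_mul lam).neg.exp).ennreal_ofReal
      rw [lintegral_const_mul _ hm2]
      by_cases hx : x ≤ t
      · rw [Set.indicator_of_mem (Set.mem_Iic.mpr hx)]
        have hM : 0 ≤ (t - x) / α := div_nonneg (by linarith) hα.le
        have hint : IntegrableOn (fun v : ℝ => Real.exp (-(lam * v)))
            (Set.Ioc 0 ((t - x) / α)) :=
          (by fun_prop : Continuous fun v : ℝ => Real.exp (-(lam * v))).integrableOn_Ioc
        rw [← ofReal_integral_eq_lintegral_ofReal hint
            (ae_of_all _ fun v => Real.exp_nonneg _),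
          expInt hlam hM, ← ENNReal.ofReal_mul (phi_nonneg x)]
      · rw [Set.indicator_of_notMem (fun h => hx (Set.mem_Iic.mp h))]
        have hemp : Set.Ioc (0 : ℝ) ((t - x) / α) = ∅ := by
          apply Set.Ioc_eq_empty
          intro hcon
          apply hx
          have : 0 < t - x := by
            by_contra hcon2
            have : (t - x) / α ≤ 0 := div_nonpos_of_nonpos_of_nonneg (by linarith) hα.le
            linarith
          linarith
        rw [hemp, Measure.restrict_empty, lintegral_zero_measure, mul_zero]
    simp only [h1]
    rw [lintegral_indicator measurableSet_Iic,
      ← ofReal_integral_eq_lintegral_ofReal (key_integrable hα hlam t)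
        ((ae_restrict_iff' measurableSet_Iic).mpr (ae_of_all _ fun x hx =>
          mul_nonneg (phi_nonneg x)
            (frac_nonneg hlam (div_nonneg (by simpa using hx) hα.le))))]
  rw [← hprod, hprod2, key_val hα hlam t]

lemma stdNormalCDF_mono : Monotone stdNormalCDF := by
  intro a b hab
  rw [stdNormalCDF_eq, stdNormalCDF_eq]
  apply setIntegral_mono_set phi_integrable.restrict
    (ae_of_all _ phi_nonneg)
  exact HasSubset.Subset.eventuallyLE (Set.Iic_subset_Iic.mpr hab)

lemma stdNormalCDF_measurable : Measurable stdNormalCDF :=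
  stdNormalCDF_mono.measurable

lemma expDensity_measurable :
    Measurable fun x : ℝ => ENNReal.ofReal (if 0 ≤ x then Real.exp (-x) else 0) := by
  apply Measurable.ennreal_ofReal
  exact Measurable.ite (measurableSet_le measurable_const measurable_id)
    measurable_id'.neg.exp measurable_const

lemma expMeasure1_lintegral (f : ℝ → ENNReal) (hf : Measurable f) :
    ∫⁻ x, f x ∂expMeasure1 = ∫⁻ x in Set.Ioi (0 : ℝ), ENNReal.ofReal (Real.exp (-x)) * f x := by
  rw [expMeasure1, lintegral_withDensity_eq_lintegral_mul _ expDensity_measurable hf,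
    setLIntegral_congr (Ioi_ae_eq_Ici (a := (0:ℝ))),
    ← lintegral_indicator measurableSet_Ici]
  congr 1
  ext x
  by_cases h : (0:ℝ) ≤ x
  · rw [Set.indicator_of_mem (Set.mem_Ici.mpr h)]
    simp [if_pos h]
  · rw [Set.indicator_of_notMem (fun hm => h (Set.mem_Ici.mp hm))]
    simp [if_neg h]

instance expMeasure1_isProb : IsProbabilityMeasure expMeasure1 := by
  constructor
  rw [← lintegral_one, expMeasure1_lintegral _ measurable_const]
  simp only [mul_one]
  have hint : IntegrableOn (fun x : ℝ => Real.exp (-x)) (Set.Ioi 0) := by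
    simpa using exp_neg_integrableOn_Ioi 0 one_pos
  rw [← ofReal_integral_eq_lintegral_ofReal hint (ae_of_all _ fun x => Real.exp_nonneg _),
    integral_exp_neg_Ioi_zero, ENNReal.ofReal_one]

lemma key1 {β : ℝ} (hβ : 0 < β) (t : ℝ) :
    ∫⁻ v in Set.Ioi (0 : ℝ), ENNReal.ofReal (Real.exp (-v) * stdNormalCDF (t - β * v))
      = ENNReal.ofReal (stdNormalCDF t
          - Real.exp (1 / (2 * β ^ 2) - t / β) * stdNormalCDF (t - 1 / β)) := by
  have h := key hβ one_ne_zero t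
  simpa using h

lemma key1_pos {β : ℝ} (hβ : 0 < β) (t : ℝ) :
    0 ≤ stdNormalCDF t - Real.exp (1 / (2 * β ^ 2) - t / β) * stdNormalCDF (t - 1 / β) := by
  have h := key_pos hβ one_ne_zero t
  simpa using h

lemma map_step {β : ℝ} (hβ : 0 < β) (s : ℝ) :
    (Measure.map (fun p : ℝ × ℝ => p.2 + β * p.1) (expMeasure1.prod (gaussianReal 0 1)))
        (Set.Iic s)
      = ENNReal.ofReal (stdNormalCDF s
          - Real.exp (1 / (2 * β ^ 2) - s / β) * stdNormalCDF (s - 1 / β)) := by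
  have hg : Measurable fun p : ℝ × ℝ => p.2 + β * p.1 :=
    measurable_snd.add (measurable_fst.const_mul β)
  rw [Measure.map_apply hg measurableSet_Iic,
    Measure.prod_apply (hg measurableSet_Iic)]
  have hfib : ∀ u : ℝ,
      (Prod.mk u ⁻¹' ((fun p : ℝ × ℝ => p.2 + β * p.1) ⁻¹' Set.Iic s)) = Set.Iic (s - β * u) := by
    intro u; ext x
    simp only [Set.mem_preimage, Set.mem_Iic]
    constructor <;> intro h <;> linarith
  simp only [hfib, gaussian_Iic]
  have hm : Measurable fun u : ℝ => ENNReal.ofReal (stdNormalCDF (s - β * u)) :=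
    (stdNormalCDF_measurable.comp ((measurable_id'.const_mul β).const_sub s)).ennreal_ofReal
  rw [expMeasure1_lintegral _ hm]
  have hc : ∀ u : ℝ, ENNReal.ofReal (Real.exp (-u)) * ENNReal.ofReal (stdNormalCDF (s - β * u))
      = ENNReal.ofReal (Real.exp (-u) * stdNormalCDF (s - β * u)) :=
    fun u => (ENNReal.ofReal_mul (Real.exp_nonneg _)).symm
  simp only [hc]
  exact key1 hβ s

end AuxCDF

open AuxCDF

theorem cdf_normal_plus_two_scaled_exponentials
    {Ω : Type*} [MeasureSpace Ω] [IsProbabilityMeasure (ℙ : Measure Ω)]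
    (Z E₀ E₁ : Ω → ℝ) (hZ : Measurable Z) (hE₀ : Measurable E₀) (hE₁ : Measurable E₁)
    (hlawZ : Measure.map Z ℙ = gaussianReal 0 1)
    (hlawE₀ : Measure.map E₀ ℙ = expMeasure1)
    (hlawE₁ : Measure.map E₁ ℙ = expMeasure1)
    (hindep : iIndepFun ![Z, E₀, E₁] ℙ)
    (α₀ α : ℝ) (hα₀ : 0 < α₀) (hα : 0 < α) (hne : α₀ ≠ α) (z : ℝ) :
    (ℙ {ω | Z ω + α₀ * E₀ ω + α * E₁ ω ≤ z}).toReal =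
      stdNormalCDF z -
        (α₀ * Real.exp (0.5 / α₀ ^ 2 - z / α₀) * stdNormalCDF (z - 1 / α₀) -
          α * Real.exp (0.5 / α ^ 2 - z / α) * stdNormalCDF (z - 1 / α)) / (α₀ - α) := by
  
  have hα₀' : α₀ ≠ 0 := hα₀.ne'
  have hα' : α ≠ 0 := hα.ne'
  have hd : α₀ - α ≠ 0 := sub_ne_zero_of_ne hne
  have hmeasv : ∀ i, Measurable (![Z, E₀, E₁] i) := by
    intro i; fin_cases i
    · exact hZ
    · exact hE₀
    · exact hE₁
  -- independence of E₀ and Z and law of the pair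
  have h01 : IndepFun E₀ Z ℙ := by
    have h := hindep.indepFun (show (1 : Fin 3) ≠ 0 by decide)
    simpa using h
  have hmap01 : Measure.map (fun ω => (E₀ ω, Z ω)) ℙ = expMeasure1.prod (gaussianReal 0 1) := by
    rw [(indepFun_iff_map_prod_eq_prod_map_map hE₀.aemeasurable hZ.aemeasurable).mp h01,
      hlawE₀, hlawZ]
  -- law of X = Z + α₀ E₀
  set X : Ω → ℝ := fun ω => Z ω + α₀ * E₀ ω with hXdef
  have hXm : Measurable X := hZ.add (hE₀.const_mul α₀)
  set μ₁ : Measure ℝ :=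
    Measure.map (fun p : ℝ × ℝ => p.2 + α₀ * p.1) (expMeasure1.prod (gaussianReal 0 1)) with hμ₁
  have hg0 : Measurable fun p : ℝ × ℝ => p.2 + α₀ * p.1 :=
    measurable_snd.add (measurable_fst.const_mul α₀)
  have hmapX : Measure.map X ℙ = μ₁ := by
    rw [hμ₁, ← hmap01, Measure.map_map hg0 (hE₀.prodMk hZ)]
    rfl
  haveI hμ₁p : IsProbabilityMeasure μ₁ := by
    rw [hμ₁]; exact Measure.isProbabilityMeasure_map hg0.aemeasurable
  have hμ₁Iic : ∀ s : ℝ, μ₁ (Set.Iic s)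
      = ENNReal.ofReal (stdNormalCDF s
          - Real.exp (1 / (2 * α₀ ^ 2) - s / α₀) * stdNormalCDF (s - 1 / α₀)) :=
    fun s => map_step hα₀ s
  -- independence of E₁ and X
  have h2 : IndepFun (fun ω => (Z ω, E₀ ω)) E₁ ℙ := by
    have h := hindep.indepFun_prodMk hmeasv 0 1 2 (by decide) (by decide)
    simpa using h
  have hXE : IndepFun E₁ X ℙ := by
    have h := h2.comp
      (show Measurable fun p : ℝ × ℝ => p.1 + α₀ * p.2 from
        measurable_fst.add (measurable_snd.const_mul α₀)) measurable_id
    exact h.symm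
  have hmapEX : Measure.map (fun ω => (E₁ ω, X ω)) ℙ = expMeasure1.prod μ₁ := by
    rw [(indepFun_iff_map_prod_eq_prod_map_map hE₁.aemeasurable hXm.aemeasurable).mp hXE,
      hlawE₁, hmapX]
  -- express probability via the product measure
  have hsetm : MeasurableSet {p : ℝ × ℝ | p.2 + α * p.1 ≤ z} :=
    measurableSet_le (measurable_snd.add (measurable_fst.const_mul α)) measurable_const
  have hset_eq : {ω | Z ω + α₀ * E₀ ω + α * E₁ ω ≤ z}
      = (fun ω => (E₁ ω, X ω)) ⁻¹' {p : ℝ × ℝ | p.2 + α * p.1 ≤ z} := by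
    ext ω
    simp only [Set.mem_setOf_eq, Set.mem_preimage, hXdef]
    try constructor <;> intro h <;> linarith
  rw [hset_eq, ← Measure.map_apply (hE₁.prodMk hXm) hsetm, hmapEX,
    Measure.prod_apply hsetm]
  have hfib : ∀ v : ℝ, (Prod.mk v ⁻¹' {p : ℝ × ℝ | p.2 + α * p.1 ≤ z}) = Set.Iic (z - α * v) := by
    intro v; ext x
    simp only [Set.mem_preimage, Set.mem_setOf_eq, Set.mem_Iic]
    constructor <;> intro h <;> linarith
  simp only [hfib, hμ₁Iic]
  have hGm : Measurable fun v : ℝ => ENNReal.ofReal (stdNormalCDF (z - α * v)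
      - Real.exp (1 / (2 * α₀ ^ 2) - (z - α * v) / α₀) * stdNormalCDF (z - α * v - 1 / α₀)) := by
    apply Measurable.ennreal_ofReal
    exact ((stdNormalCDF_measurable.comp ((measurable_id'.const_mul α).const_sub z)).sub
      (((((measurable_id'.const_mul α).const_sub z).div_const α₀).const_sub
          (1 / (2 * α₀ ^ 2))).exp.mul
        (stdNormalCDF_measurable.comp
          (((measurable_id'.const_mul α).const_sub z).sub_const (1 / α₀)))))
  rw [expMeasure1_lintegral _ hGm]
  -- split the integrand
  set K : ℝ := Real.exp (1 / (2 * α₀ ^ 2) - z / α₀) with hK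
  set lam' : ℝ := (α₀ - α) / α₀ with hlam'
  have hlam'ne : lam' ≠ 0 := div_ne_zero hd hα₀'
  set t' : ℝ := z - 1 / α₀ with ht'
  have hpt : ∀ v : ℝ, Real.exp (-v)
        * (Real.exp (1 / (2 * α₀ ^ 2) - (z - α * v) / α₀) * stdNormalCDF (z - α * v - 1 / α₀))
      = K * (Real.exp (-(lam' * v)) * stdNormalCDF (t' - α * v)) := by
    intro v
    rw [show z - α * v - 1 / α₀ = t' - α * v by rw [ht']; ring]
    rw [← mul_assoc, ← mul_assoc, ← Real.exp_add, hK, ← Real.exp_add]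
    congr 2
    rw [hlam']
    field_simp
    ring
  have hsplitpt : ∀ v : ℝ, ENNReal.ofReal (Real.exp (-v))
        * ENNReal.ofReal (stdNormalCDF (z - α * v)
            - Real.exp (1 / (2 * α₀ ^ 2) - (z - α * v) / α₀)
              * stdNormalCDF (z - α * v - 1 / α₀))
      = ENNReal.ofReal (Real.exp (-v) * stdNormalCDF (z - α * v))
          - ENNReal.ofReal (K * (Real.exp (-(lam' * v)) * stdNormalCDF (t' - α * v))) := by
    intro v
    rw [← ENNReal.ofReal_mul (Real.exp_nonneg _), mul_sub, ← hpt v,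
      ENNReal.ofReal_sub _ (mul_nonneg (Real.exp_nonneg _)
        (mul_nonneg (Real.exp_nonneg _) (stdNormalCDF_nonneg _)))]
  simp only [hsplitpt]
  -- compute the two lintegrals
  have hGgm : Measurable fun v : ℝ =>
      ENNReal.ofReal (K * (Real.exp (-(lam' * v)) * stdNormalCDF (t' - α * v))) := by
    apply Measurable.ennreal_ofReal
    exact (((measurable_id'.const_mul lam').neg.exp.mul
      (stdNormalCDF_measurable.comp
        ((measurable_id'.const_mul α).const_sub t'))).const_mul K)
  set q : ℝ := (stdNormalCDF t'
      - Real.exp (lam' ^ 2 / (2 * α ^ 2) - lam' * t' / α) * stdNormalCDF (t' - lam' / α)) / lam'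
    with hq
  have hGgint : ∫⁻ v in Set.Ioi (0 : ℝ),
      ENNReal.ofReal (K * (Real.exp (-(lam' * v)) * stdNormalCDF (t' - α * v)))
        = ENNReal.ofReal (K * q) := by
    have hc : ∀ v : ℝ, ENNReal.ofReal (K * (Real.exp (-(lam' * v)) * stdNormalCDF (t' - α * v)))
        = ENNReal.ofReal K * ENNReal.ofReal (Real.exp (-(lam' * v)) * stdNormalCDF (t' - α * v)) :=
      fun v => ENNReal.ofReal_mul (Real.exp_nonneg _)
    simp only [hc]
    have hm3 : Measurable fun v : ℝ =>
        ENNReal.ofReal (Real.exp (-(lam' * v)) * stdNormalCDF (t' - α * v)) := by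
      apply Measurable.ennreal_ofReal
      exact (measurable_id'.const_mul lam').neg.exp.mul
        (stdNormalCDF_measurable.comp ((measurable_id'.const_mul α).const_sub t'))
    rw [lintegral_const_mul _ hm3, key hα hlam'ne t', ← hq,
      ← ENNReal.ofReal_mul (Real.exp_nonneg _)]
  have hr1 : 0 ≤ stdNormalCDF z
      - Real.exp (1 / (2 * α ^ 2) - z / α) * stdNormalCDF (z - 1 / α) := key1_pos hα z
  have hq0 : 0 ≤ q := by rw [hq]; exact key_pos hα hlam'ne t'
  have hKq : 0 ≤ K * q := mul_nonneg (Real.exp_nonneg _) hq0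
  have hle : (fun v : ℝ =>
        ENNReal.ofReal (K * (Real.exp (-(lam' * v)) * stdNormalCDF (t' - α * v))))
      ≤ᵐ[volume.restrict (Set.Ioi 0)]
        fun v => ENNReal.ofReal (Real.exp (-v) * stdNormalCDF (z - α * v)) := by
    apply ae_of_all
    intro v
    apply ENNReal.ofReal_le_ofReal
    rw [← hpt v]
    apply mul_le_mul_of_nonneg_left _ (Real.exp_nonneg _)
    have h := key1_pos hα₀ (z - α * v)
    linarith [h]
  rw [lintegral_sub hGgm (by rw [hGgint]; exact ENNReal.ofReal_ne_top) hle,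
    hGgint, key1 hα z,
    ENNReal.toReal_sub_of_le (by
      rw [← hGgint, ← key1 hα z]
      exact lintegral_mono_ae hle) ENNReal.ofReal_ne_top,
    ENNReal.toReal_ofReal hr1, ENNReal.toReal_ofReal hKq]
  -- final algebra
  have harg : t' - lam' / α = z - 1 / α := by
    rw [ht', hlam']; field_simp; ring
  have hKE : K * Real.exp (lam' ^ 2 / (2 * α ^ 2) - lam' * t' / α)
      = Real.exp (0.5 / α ^ 2 - z / α) := by
    rw [hK, ← Real.exp_add]
    congr 1
    rw [hlam', ht', show (0.5 : ℝ) = 1 / 2 by norm_num]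
    field_simp
    ring
  have hK05 : K = Real.exp (0.5 / α₀ ^ 2 - z / α₀) := by
    rw [hK]
    congr 1
    rw [show (0.5 : ℝ) = 1 / 2 by norm_num]
    ring
  have he1 : Real.exp (1 / (2 * α ^ 2) - z / α) = Real.exp (0.5 / α ^ 2 - z / α) := by
    congr 1
    rw [show (0.5 : ℝ) = 1 / 2 by norm_num]
    ring
  rw [hq, harg, he1]
  set A : ℝ := stdNormalCDF (z - 1 / α₀) with hA
  set B : ℝ := stdNormalCDF (z - 1 / α) with hB
  set E₂ : ℝ := Real.exp (lam' ^ 2 / (2 * α ^ 2) - lam' * t' / α) with hE₂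
  have hexpand : K * ((stdNormalCDF t' - E₂ * B) / lam')
      = (α₀ * (K * stdNormalCDF t') - α₀ * ((K * E₂) * B)) / (α₀ - α) := by
    rw [hlam']
    field_simp
  rw [hexpand, hKE, ht', ← hA, hK05]
  field_simp
  ring
end

section
/- Fix δ₁, δ₂ > 1 and ρ₁₂ > 0, and let ℓ : (0, ∞) × (0, ∞) → ℝ be the function of the premise. Then ℓ(x₁, x₂) = ℓ(x₂, x₁) for all x₁, x₂ > 0 if and only if δ₁ = δ₂. -/
open MeasureTheory Filter Set

/-- The stable upper tail dependence function of Proposition 1. -/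
noncomputable def ellLimit (δ₁ δ₂ ρ₁₂ x₁ x₂ : ℝ) : ℝ :=
  let δ₁₂ := δ₁ + δ₂
  let y₁ := x₁ * (1 - 1 / δ₁)
  let y₂ := x₂ * (1 - 1 / δ₂)
  let δ₁s := 1 / (δ₁ - 1) - 1 / (δ₁₂ - 1)
  let δ₂s := 1 / (δ₂ - 1) - 1 / (δ₁₂ - 1)
  δ₁ * y₁ / (δ₁ - 1) * stdNormalCDF (ρ₁₂ / 2 + Real.log (y₁ / y₂) / ρ₁₂)
    + δ₂ * y₂ / (δ₂ - 1) * stdNormalCDF (ρ₁₂ / 2 + Real.log (y₂ / y₁) / ρ₁₂)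
    + y₂ ^ δ₂ * y₁ ^ (1 - δ₂) * δ₂s * Real.exp (0.5 * δ₂ * (δ₂ - 1) * ρ₁₂ ^ 2) *
        stdNormalCDF (ρ₁₂ * (0.5 - δ₂) + Real.log (y₁ / y₂) / ρ₁₂)
    + y₁ ^ δ₁ * y₂ ^ (1 - δ₁) * δ₁s * Real.exp (0.5 * δ₁ * (δ₁ - 1) * ρ₁₂ ^ 2) *
        stdNormalCDF (ρ₁₂ * (0.5 - δ₁) + Real.log (y₂ / y₁) / ρ₁₂)

open Topology

namespace EllAux

lemma ellLimit_swap (δ₁ δ₂ ρ x₁ x₂ : ℝ) :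
    ellLimit δ₂ δ₁ ρ x₂ x₁ = ellLimit δ₁ δ₂ ρ x₁ x₂ := by
  simp only [ellLimit]
  ring

/-! ### Gaussian CDF basics -/

lemma gauss_integrable :
    Integrable (fun t : ℝ => Real.exp (-t ^ 2 / 2) / Real.sqrt (2 * Real.pi)) := by
  have h : ∀ t : ℝ, Real.exp (-t ^ 2 / 2) = Real.exp (-(1/2) * t ^ 2) := by
    intro t; ring_nf
  simp only [h]
  exact (integrable_exp_neg_mul_sq (by norm_num)).div_const _

lemma gauss_total : ∫ t : ℝ, Real.exp (-t ^ 2 / 2) / Real.sqrt (2 * Real.pi) = 1 := by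
  have h : ∀ t : ℝ, Real.exp (-t ^ 2 / 2) = Real.exp (-(1/2) * t ^ 2) := by
    intro t; ring_nf
  simp only [h, integral_div, integral_gaussian]
  rw [div_eq_one_iff_eq (by positivity)]
  rw [show (Real.pi / (1/2) : ℝ) = 2 * Real.pi by ring]

lemma Phi_nonneg (x : ℝ) : 0 ≤ stdNormalCDF x := by
  apply integral_nonneg; intro t; positivity

lemma Phi_add_Ioi (x : ℝ) :
    stdNormalCDF x + ∫ t in Set.Ioi x, Real.exp (-t ^ 2 / 2) / Real.sqrt (2 * Real.pi) = 1 := by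
  rw [stdNormalCDF, ← gauss_total]
  have := integral_add_compl (measurableSet_Iic (a := x)) gauss_integrable
  rw [Set.compl_Iic] at this
  exact this

lemma Phi_le_one (x : ℝ) : stdNormalCDF x ≤ 1 := by
  have h := Phi_add_Ioi x
  have h2 : 0 ≤ ∫ t in Set.Ioi x, Real.exp (-t ^ 2 / 2) / Real.sqrt (2 * Real.pi) := by
    apply integral_nonneg; intro t; positivity
  linarith

lemma one_le_sqrt2pi : 1 ≤ Real.sqrt (2 * Real.pi) := by
  rw [show (1:ℝ) = Real.sqrt 1 by simp]
  apply Real.sqrt_le_sqrt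
  nlinarith [Real.pi_gt_three]

lemma gauss_le (M t : ℝ) (hM : 0 < M) (ht : 2 * M ≤ t) :
    Real.exp (-t ^ 2 / 2) / Real.sqrt (2 * Real.pi) ≤ Real.exp (-M * t) := by
  have h1 : Real.exp (-t ^ 2 / 2) / Real.sqrt (2 * Real.pi) ≤ Real.exp (-t ^ 2 / 2) :=
    div_le_self (le_of_lt (Real.exp_pos _)) one_le_sqrt2pi
  refine h1.trans (Real.exp_le_exp.mpr ?_)
  nlinarith

lemma int_exp_neg_Ioi (M c : ℝ) (hM : 0 < M) :
    ∫ t in Set.Ioi c, Real.exp (-M * t) = Real.exp (-M * c) / M := by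
  have := integral_comp_mul_left_Ioi (fun u => Real.exp (-u)) c hM
  simp only [smul_eq_mul, neg_mul] at this ⊢
  rw [this, integral_exp_neg_Ioi]
  ring

lemma Phi_tail_hi (M x : ℝ) (hM : 0 < M) (hx : 2 * M ≤ x) :
    1 - stdNormalCDF x ≤ Real.exp (-M * x) / M := by
  have h := Phi_add_Ioi x
  have hle : ∫ t in Set.Ioi x, Real.exp (-t ^ 2 / 2) / Real.sqrt (2 * Real.pi)
      ≤ ∫ t in Set.Ioi x, Real.exp (-M * t) := by
    apply setIntegral_mono_on gauss_integrable.integrableOn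
      (exp_neg_integrableOn_Ioi x hM) measurableSet_Ioi
    intro t ht
    exact gauss_le M t hM (hx.trans (le_of_lt ht))
  rw [int_exp_neg_Ioi M x hM] at hle
  linarith

lemma Phi_tail_lo (M x : ℝ) (hM : 0 < M) (hx : x ≤ -(2 * M)) :
    stdNormalCDF x ≤ Real.exp (M * x) / M := by
  rw [stdNormalCDF]
  have heq : (∫ t in Set.Iic x, Real.exp (-t ^ 2 / 2) / Real.sqrt (2 * Real.pi))
      = ∫ t in Set.Ioi (-x), Real.exp (-t ^ 2 / 2) / Real.sqrt (2 * Real.pi) := by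
    rw [← integral_comp_neg_Iic]
    congr 1; funext t; rw [neg_sq]
  rw [heq]
  have hle : ∫ t in Set.Ioi (-x), Real.exp (-t ^ 2 / 2) / Real.sqrt (2 * Real.pi)
      ≤ ∫ t in Set.Ioi (-x), Real.exp (-M * t) := by
    apply setIntegral_mono_on gauss_integrable.integrableOn
      (exp_neg_integrableOn_Ioi _ hM) measurableSet_Ioi
    intro t ht
    exact gauss_le M t hM (le_of_lt (lt_of_le_of_lt (by linarith) ht))
  rw [int_exp_neg_Ioi M (-x) hM] at hle
  rw [show -M * -x = M * x by ring] at hle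
  exact hle

/-! ### Limit lemmas -/

lemma lin_atBot {r : ℝ} (hr : r < 0) : Tendsto (fun s : ℝ => r * s) atTop atBot :=
  tendsto_id.const_mul_atTop_of_neg hr

lemma exp_lin_zero {r : ℝ} (hr : r < 0) :
    Tendsto (fun s : ℝ => Real.exp (r * s)) atTop (𝓝 0) :=
  Real.tendsto_exp_atBot.comp (lin_atBot hr)

lemma lemL {ρ : ℝ} (hρ : 0 < ρ) (b c d : ℝ) :
    Tendsto (fun s => Real.exp (b * s) * stdNormalCDF (c + (d - s) / ρ)) atTop (𝓝 0) := by
  set M := ρ * (|b| + 1) with hM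
  have hMpos : 0 < M := by positivity
  have hMdiv : M / ρ = |b| + 1 := by rw [hM]; field_simp
  have hbM : b - M / ρ < 0 := by
    rw [hMdiv]; have := le_abs_self b; linarith
  apply squeeze_zero'
    (g := fun s => Real.exp (M * c + M * d / ρ) / M * Real.exp ((b - M / ρ) * s))
  · filter_upwards with s
    exact mul_nonneg (Real.exp_pos _).le (Phi_nonneg _)
  · filter_upwards [eventually_ge_atTop (d + ρ * (2 * M + c))] with s hs
    have harg : c + (d - s) / ρ ≤ -(2 * M) := by
      have h1 : (d - s) / ρ ≤ -(2 * M) - c := by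
        rw [div_le_iff₀ hρ]; nlinarith
      linarith
    calc Real.exp (b * s) * stdNormalCDF (c + (d - s) / ρ)
        ≤ Real.exp (b * s) * (Real.exp (M * (c + (d - s) / ρ)) / M) :=
          mul_le_mul_of_nonneg_left (Phi_tail_lo M _ hMpos harg) (Real.exp_pos _).le
      _ = Real.exp (M * c + M * d / ρ) / M * Real.exp ((b - M / ρ) * s) := by
          rw [mul_div_assoc', ← Real.exp_add, div_mul_eq_mul_div, ← Real.exp_add]
          congr 2
          field_simp
          ring
  · have h3 := (exp_lin_zero hbM).const_mul (Real.exp (M * c + M * d / ρ) / M)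
    simpa using h3

lemma lemHpos {ρ : ℝ} (hρ : 0 < ρ) (b c d : ℝ) :
    Tendsto (fun s => Real.exp (b * s) * (1 - stdNormalCDF (c + (d + s) / ρ))) atTop (𝓝 0) := by
  set M := ρ * (|b| + 1) with hM
  have hMpos : 0 < M := by positivity
  have hMdiv : M / ρ = |b| + 1 := by rw [hM]; field_simp
  have hbM : b - M / ρ < 0 := by
    rw [hMdiv]; have := le_abs_self b; linarith
  apply squeeze_zero'
    (g := fun s => Real.exp (-(M * c) - M * d / ρ) / M * Real.exp ((b - M / ρ) * s))
  · filter_upwards with s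
    exact mul_nonneg (Real.exp_pos _).le (by linarith [Phi_le_one (c + (d + s) / ρ)])
  · filter_upwards [eventually_ge_atTop (-d + ρ * (2 * M - c))] with s hs
    have harg : 2 * M ≤ c + (d + s) / ρ := by
      have h1 : 2 * M - c ≤ (d + s) / ρ := by
        rw [le_div_iff₀ hρ]; nlinarith
      linarith
    calc Real.exp (b * s) * (1 - stdNormalCDF (c + (d + s) / ρ))
        ≤ Real.exp (b * s) * (Real.exp (-M * (c + (d + s) / ρ)) / M) :=
          mul_le_mul_of_nonneg_left (Phi_tail_hi M _ hMpos harg) (Real.exp_pos _).le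
      _ = Real.exp (-(M * c) - M * d / ρ) / M * Real.exp ((b - M / ρ) * s) := by
          rw [mul_div_assoc', ← Real.exp_add, div_mul_eq_mul_div, ← Real.exp_add]
          congr 2
          field_simp
          ring
  · have h3 := (exp_lin_zero hbM).const_mul (Real.exp (-(M * c) - M * d / ρ) / M)
    simpa using h3

lemma lemH {ρ : ℝ} (hρ : 0 < ρ) (b c d : ℝ) :
    Tendsto (fun s => Real.exp (b * s) * (stdNormalCDF (c + (d + s) / ρ) - 1)) atTop (𝓝 0) := by
  have h := (lemHpos hρ b c d).neg
  simp only [neg_zero] at h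
  refine h.congr fun s => by ring

lemma lemO {ρ : ℝ} (hρ : 0 < ρ) (c d : ℝ) :
    Tendsto (fun s => stdNormalCDF (c + (d + s) / ρ)) atTop (𝓝 1) := by
  have h := lemH hρ 0 c d
  simp only [zero_mul, Real.exp_zero, one_mul] at h
  have h2 := h.add_const 1
  simpa using h2

lemma lemB {ρ : ℝ} (hρ : 0 < ρ) {b : ℝ} (c d : ℝ) (hb : b < 0) :
    Tendsto (fun s => Real.exp (b * s) * stdNormalCDF (c + (d + s) / ρ)) atTop (𝓝 0) := by
  apply squeeze_zero' (g := fun s => Real.exp (b * s))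
  · filter_upwards with s
    exact mul_nonneg (Real.exp_pos _).le (Phi_nonneg _)
  · filter_upwards with s
    exact mul_le_of_le_one_right (Real.exp_pos _).le (Phi_le_one _)
  · exact exp_lin_zero hb

lemma not_symm_of_lt (δ₁ δ₂ ρ : ℝ) (hδ₁ : 1 < δ₁) (hδ₂ : 1 < δ₂) (hlt : δ₁ < δ₂) (hρ : 0 < ρ)
    (h : ∀ x₁ x₂ : ℝ, 0 < x₁ → 0 < x₂ → ellLimit δ₁ δ₂ ρ x₁ x₂ = ellLimit δ₁ δ₂ ρ x₂ x₁) :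
    False := by
  have hδ₁0 : (0:ℝ) < δ₁ := by linarith
  have hδ₂0 : (0:ℝ) < δ₂ := by linarith
  have hne1 : δ₁ - 1 ≠ 0 := by intro hh; nlinarith
  have hne2 : δ₂ - 1 ≠ 0 := by intro hh; nlinarith
  have ha₁ : (0:ℝ) < 1 - 1/δ₁ := by
    rw [sub_pos, div_lt_one hδ₁0]; exact hδ₁
  have ha₂ : (0:ℝ) < 1 - 1/δ₂ := by
    rw [sub_pos, div_lt_one hδ₂0]; exact hδ₂
  set L : ℝ := Real.log (1 - 1/δ₁) - Real.log (1 - 1/δ₂) with hLdef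
  set C₂ : ℝ := (1 - 1/δ₂) ^ δ₂ * (1 - 1/δ₁) ^ (1 - δ₂) * (1/(δ₂-1) - 1/(δ₁+δ₂-1)) *
      Real.exp (0.5 * δ₂ * (δ₂ - 1) * ρ ^ 2) with hC₂def
  set K : ℝ := (1 - 1/δ₁) ^ δ₁ * (1 - 1/δ₂) ^ (1 - δ₁) * (1/(δ₁-1) - 1/(δ₁+δ₂-1)) *
      Real.exp (0.5 * δ₁ * (δ₁ - 1) * ρ ^ 2) with hKdef
  have hKpos : 0 < K := by
    rw [hKdef]
    have hD : 0 < 1/(δ₁-1) - 1/(δ₁+δ₂-1) := by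
      rw [sub_pos]
      apply one_div_lt_one_div_of_lt (by linarith) (by linarith)
    have h1 : (0:ℝ) < (1 - 1/δ₁) ^ δ₁ := Real.rpow_pos_of_pos ha₁ _
    have h2 : (0:ℝ) < (1 - 1/δ₂) ^ (1 - δ₁) := Real.rpow_pos_of_pos ha₂ _
    positivity
  -- the explicit form of the difference
  set G : ℝ → ℝ := fun s =>
      Real.exp (-s) * stdNormalCDF (ρ/2 + (L - s)/ρ)
    + stdNormalCDF (ρ/2 + (-L + s)/ρ)
    + C₂ * (Real.exp (-s * (1 - δ₂)) * stdNormalCDF (ρ * (0.5 - δ₂) + (L - s)/ρ))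
    + K * (Real.exp (-s * δ₁) * stdNormalCDF (ρ * (0.5 - δ₁) + (-L + s)/ρ))
    - stdNormalCDF (ρ/2 + (L + s)/ρ)
    - Real.exp (-s) * stdNormalCDF (ρ/2 + (-L - s)/ρ)
    - C₂ * (Real.exp (-s * δ₂) * stdNormalCDF (ρ * (0.5 - δ₂) + (L + s)/ρ))
    - K * (Real.exp (-s * (1 - δ₁)) * stdNormalCDF (ρ * (0.5 - δ₁) + (-L - s)/ρ)) with hGdef
  have EQ : ∀ s : ℝ,
      ellLimit δ₁ δ₂ ρ (Real.exp (-s)) 1 - ellLimit δ₁ δ₂ ρ 1 (Real.exp (-s)) = G s := by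
    intro s
    have he : (0:ℝ) < Real.exp (-s) := Real.exp_pos _
    have hlog1 : Real.log (Real.exp (-s) * (1 - 1/δ₁) / (1 - 1/δ₂)) = L - s := by
      rw [Real.log_div (by positivity) ha₂.ne', Real.log_mul (Real.exp_ne_zero _) ha₁.ne',
        Real.log_exp, hLdef]; ring
    have hlog2 : Real.log ((1 - 1/δ₂) / (Real.exp (-s) * (1 - 1/δ₁))) = -L + s := by
      rw [Real.log_div ha₂.ne' (by positivity), Real.log_mul (Real.exp_ne_zero _) ha₁.ne',
        Real.log_exp, hLdef]; ring
    have hlog3 : Real.log ((1 - 1/δ₁) / (Real.exp (-s) * (1 - 1/δ₂))) = L + s := by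
      rw [Real.log_div ha₁.ne' (by positivity), Real.log_mul (Real.exp_ne_zero _) ha₂.ne',
        Real.log_exp, hLdef]; ring
    have hlog4 : Real.log (Real.exp (-s) * (1 - 1/δ₂) / (1 - 1/δ₁)) = -L - s := by
      rw [Real.log_div (by positivity) ha₁.ne', Real.log_mul (Real.exp_ne_zero _) ha₂.ne',
        Real.log_exp, hLdef]; ring
    have hp1 : (Real.exp (-s) * (1 - 1/δ₁)) ^ δ₁
        = Real.exp (-s * δ₁) * (1 - 1/δ₁) ^ δ₁ := by
      rw [Real.mul_rpow he.le ha₁.le, ← Real.exp_mul]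
    have hp2 : (Real.exp (-s) * (1 - 1/δ₁)) ^ (1 - δ₂)
        = Real.exp (-s * (1 - δ₂)) * (1 - 1/δ₁) ^ (1 - δ₂) := by
      rw [Real.mul_rpow he.le ha₁.le, ← Real.exp_mul]
    have hp3 : (Real.exp (-s) * (1 - 1/δ₂)) ^ δ₂
        = Real.exp (-s * δ₂) * (1 - 1/δ₂) ^ δ₂ := by
      rw [Real.mul_rpow he.le ha₂.le, ← Real.exp_mul]
    have hp4 : (Real.exp (-s) * (1 - 1/δ₂)) ^ (1 - δ₁)
        = Real.exp (-s * (1 - δ₁)) * (1 - 1/δ₂) ^ (1 - δ₁) := by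
      rw [Real.mul_rpow he.le ha₂.le, ← Real.exp_mul]
    have hc1 : δ₁ * (Real.exp (-s) * (1 - 1/δ₁)) / (δ₁ - 1) = Real.exp (-s) := by
      field_simp [hδ₁0.ne', hne1]
    have hc2 : δ₂ * (1 - 1/δ₂) / (δ₂ - 1) = 1 := by
      field_simp [hδ₂0.ne', hne2]
    have hc3 : δ₁ * (1 - 1/δ₁) / (δ₁ - 1) = 1 := by
      field_simp [hδ₁0.ne', hne1]
    have hc4 : δ₂ * (Real.exp (-s) * (1 - 1/δ₂)) / (δ₂ - 1) = Real.exp (-s) := by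
      field_simp [hδ₂0.ne', hne2]
    simp only [ellLimit, one_mul]
    rw [hlog1, hlog2, hlog3, hlog4, hp1, hp2, hp3, hp4, hc1, hc2, hc3, hc4, hGdef,
      hC₂def, hKdef]
    ring
  have hzero : ∀ s : ℝ, G s = 0 := by
    intro s
    rw [← EQ s, h (Real.exp (-s)) 1 (Real.exp_pos _) one_pos, sub_self]
  -- the limit of G s * exp (δ₁ s)
  have hlim : Tendsto (fun s => G s * Real.exp (δ₁ * s)) atTop (𝓝 K) := by
    have T1 : Tendsto (fun s => Real.exp (-s) * stdNormalCDF (ρ/2 + (L - s)/ρ)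
        * Real.exp (δ₁ * s)) atTop (𝓝 0) := by
      refine (lemL hρ (δ₁ - 1) (ρ/2) L).congr fun s => ?_
      rw [show (δ₁ - 1) * s = -s + δ₁ * s by ring, Real.exp_add]; ring
    have T2 : Tendsto (fun s => (stdNormalCDF (ρ/2 + (-L + s)/ρ)
        - stdNormalCDF (ρ/2 + (L + s)/ρ)) * Real.exp (δ₁ * s)) atTop (𝓝 0) := by
      have h12 := (lemH hρ δ₁ (ρ/2) (-L)).sub (lemH hρ δ₁ (ρ/2) L)
      rw [sub_zero] at h12
      refine h12.congr fun s => by ring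
    have T3 : Tendsto (fun s => C₂ * (Real.exp (-s * (1 - δ₂))
        * stdNormalCDF (ρ * (0.5 - δ₂) + (L - s)/ρ)) * Real.exp (δ₁ * s)) atTop (𝓝 0) := by
      have h3 := (lemL hρ (δ₁ + δ₂ - 1) (ρ * (0.5 - δ₂)) L).const_mul C₂
      rw [mul_zero] at h3
      refine h3.congr fun s => ?_
      rw [show (δ₁ + δ₂ - 1) * s = -s * (1 - δ₂) + δ₁ * s by ring, Real.exp_add]; ring
    have T4 : Tendsto (fun s => K * (Real.exp (-s * δ₁)
        * stdNormalCDF (ρ * (0.5 - δ₁) + (-L + s)/ρ)) * Real.exp (δ₁ * s)) atTop (𝓝 K) := by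
      have h4 := (lemO hρ (ρ * (0.5 - δ₁)) (-L)).const_mul K
      rw [mul_one] at h4
      refine h4.congr fun s => ?_
      have e1 : Real.exp (-s * δ₁) * Real.exp (δ₁ * s) = 1 := by
        rw [← Real.exp_add, show -s * δ₁ + δ₁ * s = 0 by ring, Real.exp_zero]
      calc K * stdNormalCDF (ρ * (0.5 - δ₁) + (-L + s)/ρ)
          = K * stdNormalCDF (ρ * (0.5 - δ₁) + (-L + s)/ρ)
            * (Real.exp (-s * δ₁) * Real.exp (δ₁ * s)) := by rw [e1, mul_one]
        _ = K * (Real.exp (-s * δ₁) * stdNormalCDF (ρ * (0.5 - δ₁) + (-L + s)/ρ))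
            * Real.exp (δ₁ * s) := by ring
    have T6 : Tendsto (fun s => Real.exp (-s) * stdNormalCDF (ρ/2 + (-L - s)/ρ)
        * Real.exp (δ₁ * s)) atTop (𝓝 0) := by
      refine (lemL hρ (δ₁ - 1) (ρ/2) (-L)).congr fun s => ?_
      rw [show (δ₁ - 1) * s = -s + δ₁ * s by ring, Real.exp_add]; ring
    have T7 : Tendsto (fun s => C₂ * (Real.exp (-s * δ₂)
        * stdNormalCDF (ρ * (0.5 - δ₂) + (L + s)/ρ)) * Real.exp (δ₁ * s)) atTop (𝓝 0) := by
      have h7 := (lemB hρ (ρ * (0.5 - δ₂)) L (show δ₁ - δ₂ < 0 by linarith)).const_mul C₂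
      rw [mul_zero] at h7
      refine h7.congr fun s => ?_
      rw [show (δ₁ - δ₂) * s = -s * δ₂ + δ₁ * s by ring, Real.exp_add]; ring
    have T8 : Tendsto (fun s => K * (Real.exp (-s * (1 - δ₁))
        * stdNormalCDF (ρ * (0.5 - δ₁) + (-L - s)/ρ)) * Real.exp (δ₁ * s)) atTop (𝓝 0) := by
      have h8 := (lemL hρ (2 * δ₁ - 1) (ρ * (0.5 - δ₁)) (-L)).const_mul K
      rw [mul_zero] at h8
      refine h8.congr fun s => ?_
      rw [show (2 * δ₁ - 1) * s = -s * (1 - δ₁) + δ₁ * s by ring, Real.exp_add]; ring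
    have hsum := ((((((T1.add T2).add T3).add T4).sub T6).sub T7).sub T8)
    have hval : ((((((0:ℝ) + 0) + 0) + K) - 0) - 0) - 0 = K := by ring
    rw [hval] at hsum
    refine hsum.congr fun s => ?_
    rw [hGdef]
    ring
  have hzero' : Tendsto (fun s => G s * Real.exp (δ₁ * s)) atTop (𝓝 0) := by
    refine tendsto_const_nhds.congr fun s => ?_
    rw [hzero s, zero_mul]
  have : K = 0 := tendsto_nhds_unique hlim hzero'
  linarith


end EllAux

theorem ellLimit_symm_iff (δ₁ δ₂ ρ₁₂ : ℝ) (hδ₁ : 1 < δ₁) (hδ₂ : 1 < δ₂) (hρ : 0 < ρ₁₂) :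
    (∀ x₁ x₂ : ℝ, 0 < x₁ → 0 < x₂ → ellLimit δ₁ δ₂ ρ₁₂ x₁ x₂ = ellLimit δ₁ δ₂ ρ₁₂ x₂ x₁) ↔
      δ₁ = δ₂ := by
  constructor
  · intro h
    by_contra hne
    rcases lt_or_gt_of_ne hne with hlt | hlt
    · exact EllAux.not_symm_of_lt δ₁ δ₂ ρ₁₂ hδ₁ hδ₂ hlt hρ h
    · refine EllAux.not_symm_of_lt δ₂ δ₁ ρ₁₂ hδ₂ hδ₁ hlt hρ ?_
      intro x₁ x₂ hx₁ hx₂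
      rw [EllAux.ellLimit_swap δ₁ δ₂ ρ₁₂ x₂ x₁, EllAux.ellLimit_swap δ₁ δ₂ ρ₁₂ x₁ x₂]
      exact h x₂ x₁ hx₂ hx₁
  · intro heq
    subst heq
    intro x₁ x₂ _ _
    exact EllAux.ellLimit_swap δ₁ δ₁ ρ₁₂ x₂ x₁
end
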